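/- Let H = ⊕_{j=a}^{b} O_{ℙ¹}(j)^{m_j} (a ≤ b, m_a, m_b ≠ 0) be the spectrum of a semistable rank-2 vector bundle E on Z, with d = deg(H) and r = rk(H), and assume that for a generic S ∈ |L| the system |K_S^{−1}| is ample. Then a ≥ (d−1)/(r+2) − (r+1)/2 and b ≤ (d−1)/(r+2) + (r+1)/2. -/
import Mathlib

set_option maxHeartbeats 400000
open Finset

private theorem icc_insert' (a c : ℤ) (h : a ≤ c + 1) :
    Finset.Icc a (c+1) = insert (c+1) (Finset.Icc a c) := by
  ext x; simp only [Finset.mem_Icc, Finset.mem_insert]; omega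

private theorem gauss' (a c : ℤ) (hc : a - 1 ≤ c) :
    2 * ∑ j ∈ Finset.Icc a c, (j - a) = (c - a) * (c - a + 1) := by
  obtain ⟨n, rfl⟩ : ∃ n : ℕ, c = a - 1 + n := ⟨(c - (a-1)).toNat, by omega⟩
  induction n with
  | zero => simp
  | succ n ih =>
      have ih' := ih (by omega)
      have h1 : a - 1 + (n+1 : ℕ) = (a - 1 + n) + 1 := by push_cast; ring
      rw [h1, icc_insert' _ _ (by omega), Finset.sum_insert (by simp [Finset.mem_Icc])]
      push_cast at ih' ⊢
      ring_nf at ih' ⊢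
      linarith

private theorem card_icc' (a c : ℤ) (h : a - 1 ≤ c) :
    ((Finset.Icc a c).card : ℤ) = c + 1 - a := by
  rw [Int.card_Icc]; omega

private theorem keyI (m : ℤ →₀ ℕ) (a b : ℤ) (hab : a ≤ b) (ha : m a ≠ 0) (hb : m b ≠ 0)
    (hsupp : ∀ j : ℤ, m j ≠ 0 → a ≤ j ∧ j ≤ b)
    (hconn₁ : 1 < b → ∀ j : ℤ, 1 ≤ j → j ≤ b - 1 → m j ≠ 0)
    (hconn₂ : a < -2 → ∀ j : ℤ, a + 1 ≤ j → j ≤ -2 → m j ≠ 0)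
    (R dd : ℤ) (hR : R = ∑ j ∈ m.support, (m j : ℤ))
    (hd : dd = ∑ j ∈ m.support, j * (m j : ℤ)) :
    2 * b * (R + 2) ≤ 2 * dd + (R + 2) * (R + 1) - 2 := by
  classical
  set neg := m.support.filter (fun j => j < 0) with hnegdef
  set pos := m.support.filter (fun j => ¬ j < 0) with hposdef
  set q := ∑ j ∈ neg, (m j : ℤ) with hqdef
  set Rp := ∑ j ∈ pos, (m j : ℤ) with hRpdef
  set Sn := ∑ j ∈ neg, j * (m j : ℤ) with hSndef
  set Sp := ∑ j ∈ pos, j * (m j : ℤ) with hSpdef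
  have hdsplit : dd = Sn + Sp := by
    rw [hd, ← Finset.sum_filter_add_sum_filter_not m.support (fun j => j < 0)]
  have hRsplit : R = q + Rp := by
    rw [hR, ← Finset.sum_filter_add_sum_filter_not m.support (fun j => j < 0)]
  have hq0 : 0 ≤ q := Finset.sum_nonneg fun j _ => by positivity
  have hRp0 : 0 ≤ Rp := Finset.sum_nonneg fun j _ => by positivity
  -- negative part bound
  have hneg : 2 - (q + 1) * (q + 2) ≤ 2 * Sn := by
    by_cases hA : a < -2
    · have hsub : Finset.Icc a (-2) ⊆ neg := by
        intro j hj
        rw [Finset.mem_Icc] at hj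
        rw [hnegdef, Finset.mem_filter, Finsupp.mem_support_iff]
        refine ⟨?_, by omega⟩
        rcases eq_or_lt_of_le hj.1 with h | h
        · rwa [← h]
        · exact hconn₂ hA j (by omega) hj.2
      have hone : ∀ j ∈ Finset.Icc a (-2), 1 ≤ (m j : ℤ) := by
        intro j hj
        have := hsub hj
        rw [hnegdef, Finset.mem_filter, Finsupp.mem_support_iff] at this
        exact_mod_cast Nat.one_le_iff_ne_zero.mpr this.1
      have hstep1 : ∑ j ∈ Finset.Icc a (-2), (j - a) ≤
          ∑ j ∈ Finset.Icc a (-2), (j - a) * (m j : ℤ) := by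
        refine Finset.sum_le_sum fun j hj => ?_
        have h1 := hone j hj
        rw [Finset.mem_Icc] at hj
        nlinarith [hj.1]
      have hstep2 : ∑ j ∈ Finset.Icc a (-2), (j - a) * (m j : ℤ) ≤
          ∑ j ∈ neg, (j - a) * (m j : ℤ) := by
        refine Finset.sum_le_sum_of_subset_of_nonneg hsub fun j hj _ => ?_
        rw [hnegdef, Finset.mem_filter, Finsupp.mem_support_iff] at hj
        have h2 := (hsupp j hj.1).1
        have h3 : (0:ℤ) ≤ (m j : ℤ) := by positivity
        nlinarith
      have hexp : ∑ j ∈ neg, (j - a) * (m j : ℤ) = Sn - a * q := by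
        rw [hSndef, hqdef, Finset.mul_sum, ← Finset.sum_sub_distrib]
        exact Finset.sum_congr rfl fun j _ => by ring
      have hg := gauss' a (-2) (by omega)
      have hcard : ((Finset.Icc a (-2)).card : ℤ) = -1 - a := by
        rw [card_icc' a (-2) (by omega)]; ring
      have hqt : -1 - a ≤ q := by
        have h4 : ∑ j ∈ Finset.Icc a (-2), (1:ℤ) ≤
            ∑ j ∈ Finset.Icc a (-2), (m j : ℤ) := Finset.sum_le_sum hone
        have h5 : ∑ j ∈ Finset.Icc a (-2), (m j : ℤ) ≤ q := by
          rw [hqdef]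
          exact Finset.sum_le_sum_of_subset_of_nonneg hsub fun j _ _ => by positivity
        simp only [Finset.sum_const, nsmul_eq_mul, mul_one] at h4
        rw [hcard] at h4
        linarith
      have hfin : 2 * a * q + (-2 - a) * (-2 - a + 1) ≤ 2 * Sn := by
        have := hstep1.trans hstep2
        rw [hexp] at this
        linarith
      nlinarith [mul_nonneg (by linarith : (0:ℤ) ≤ q + 1 + a) (by linarith : (0:ℤ) ≤ q + 2 + a)]
    · -- a ≥ -2 : every negative index is ≥ -2
      have h6 : -2 * q ≤ Sn := by
        rw [hSndef, hqdef, Finset.mul_sum]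
        refine Finset.sum_le_sum fun j hj => ?_
        rw [hnegdef, Finset.mem_filter, Finsupp.mem_support_iff] at hj
        have h2 := (hsupp j hj.1).1
        have h3 : (0:ℤ) ≤ (m j : ℤ) := by positivity
        nlinarith
      rcases eq_or_lt_of_le hq0 with h | h
      · nlinarith
      · nlinarith
  -- positive part bound and conclusion
  by_cases hB : 1 ≤ b
  · have hsub : Finset.Icc 1 b ⊆ pos := by
      intro j hj
      rw [Finset.mem_Icc] at hj
      rw [hposdef, Finset.mem_filter, Finsupp.mem_support_iff]
      refine ⟨?_, by omega⟩
      rcases eq_or_lt_of_le hj.2 with h | h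
      · rwa [h]
      · exact hconn₁ (by omega) j hj.1 (by omega)
    have hone : ∀ j ∈ Finset.Icc 1 b, 1 ≤ (m j : ℤ) := by
      intro j hj
      have := hsub hj
      rw [hposdef, Finset.mem_filter, Finsupp.mem_support_iff] at this
      exact_mod_cast Nat.one_le_iff_ne_zero.mpr this.1
    have hstep1 : ∑ j ∈ Finset.Icc 1 b, j ≤
        ∑ j ∈ Finset.Icc 1 b, j * (m j : ℤ) := by
      refine Finset.sum_le_sum fun j hj => ?_
      have h1 := hone j hj
      rw [Finset.mem_Icc] at hj
      nlinarith [hj.1]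
    have hstep2 : ∑ j ∈ Finset.Icc 1 b, j * (m j : ℤ) ≤ Sp := by
      rw [hSpdef]
      refine Finset.sum_le_sum_of_subset_of_nonneg hsub fun j hj _ => ?_
      rw [hposdef, Finset.mem_filter, Finsupp.mem_support_iff] at hj
      have h3 : (0:ℤ) ≤ (m j : ℤ) := by positivity
      nlinarith [hj.2]
    have hg := gauss' 1 b (by omega)
    have hcard : ((Finset.Icc 1 b).card : ℤ) = b := by
      rw [card_icc' 1 b (by omega)]; ring
    have hsplit1 : ∑ j ∈ Finset.Icc 1 b, (j - 1) =
        (∑ j ∈ Finset.Icc 1 b, j) - ((Finset.Icc 1 b).card : ℤ) := by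
      rw [Finset.sum_sub_distrib, Finset.sum_const, nsmul_eq_mul, mul_one]
    have hSp : b * (b + 1) ≤ 2 * Sp := by
      have := hstep1.trans hstep2
      rw [hsplit1, hcard] at hg
      nlinarith
    have hRpb : b ≤ Rp := by
      have h4 : ∑ j ∈ Finset.Icc 1 b, (1:ℤ) ≤
          ∑ j ∈ Finset.Icc 1 b, (m j : ℤ) := Finset.sum_le_sum hone
      have h5 : ∑ j ∈ Finset.Icc 1 b, (m j : ℤ) ≤ Rp := by
        rw [hRpdef]
        exact Finset.sum_le_sum_of_subset_of_nonneg hsub fun j _ _ => by positivity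
      simp only [Finset.sum_const, nsmul_eq_mul, mul_one] at h4
      rw [hcard] at h4
      linarith
    nlinarith [mul_nonneg (by linarith : (0:ℤ) ≤ Rp - b)
      (by linarith : (0:ℤ) ≤ R + q - b + 3)]
  · have hSp0 : 0 ≤ Sp := by
      refine Finset.sum_nonneg fun j hj => ?_
      rw [hposdef, Finset.mem_filter] at hj
      have : 0 ≤ j := by omega
      positivity
    nlinarith [mul_nonneg hRp0 (by linarith : (0:ℤ) ≤ R + q + 3),
      mul_nonneg (by linarith : (0:ℤ) ≤ -2 * b) (by linarith : (0:ℤ) ≤ R + 2)]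

private theorem keyII (m : ℤ →₀ ℕ) (a b : ℤ) (hab : a ≤ b) (ha : m a ≠ 0) (hb : m b ≠ 0)
    (hsupp : ∀ j : ℤ, m j ≠ 0 → a ≤ j ∧ j ≤ b)
    (hconn₁ : 1 < b → ∀ j : ℤ, 1 ≤ j → j ≤ b - 1 → m j ≠ 0)
    (hconn₂ : a < -2 → ∀ j : ℤ, a + 1 ≤ j → j ≤ -2 → m j ≠ 0)
    (R dd : ℤ) (hR : R = ∑ j ∈ m.support, (m j : ℤ))
    (hd : dd = ∑ j ∈ m.support, j * (m j : ℤ)) :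
    2 * dd ≤ (R + 2) * (2 * a + R + 1) + 2 := by
  classical
  set pos := m.support.filter (fun j => 0 < j) with hposdef
  set neg := m.support.filter (fun j => ¬ 0 < j) with hnegdef
  set p := ∑ j ∈ pos, (m j : ℤ) with hpdef
  set Rn := ∑ j ∈ neg, (m j : ℤ) with hRndef
  set Sp := ∑ j ∈ pos, j * (m j : ℤ) with hSpdef
  set Sn := ∑ j ∈ neg, j * (m j : ℤ) with hSndef
  have hdsplit : dd = Sp + Sn := by
    rw [hd, ← Finset.sum_filter_add_sum_filter_not m.support (fun j => 0 < j)]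
  have hRsplit : R = p + Rn := by
    rw [hR, ← Finset.sum_filter_add_sum_filter_not m.support (fun j => 0 < j)]
  have hp0 : 0 ≤ p := Finset.sum_nonneg fun j _ => by positivity
  have hRn0 : 0 ≤ Rn := Finset.sum_nonneg fun j _ => by positivity
  -- positive part upper bound : 2*Sp ≤ p*(p+1)
  have hpos : 2 * Sp ≤ p * (p + 1) := by
    by_cases hB : 1 ≤ b
    · have hsub : Finset.Icc 1 b ⊆ pos := by
        intro j hj
        rw [Finset.mem_Icc] at hj
        rw [hposdef, Finset.mem_filter, Finsupp.mem_support_iff]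
        refine ⟨?_, by omega⟩
        rcases eq_or_lt_of_le hj.2 with h | h
        · rwa [h]
        · exact hconn₁ (by omega) j hj.1 (by omega)
      have hone : ∀ j ∈ Finset.Icc 1 b, 1 ≤ (m j : ℤ) := by
        intro j hj
        have := hsub hj
        rw [hposdef, Finset.mem_filter, Finsupp.mem_support_iff] at this
        exact_mod_cast Nat.one_le_iff_ne_zero.mpr this.1
      have hsub' : Finset.Icc 1 (b-1) ⊆ pos := by
        refine Finset.Subset.trans ?_ hsub
        intro j hj; rw [Finset.mem_Icc] at hj ⊢; omega
      -- ∑_{Icc 1 (b-1)} (b - j) ≤ ∑_{pos} (b - j) * m j = b*p - Sp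
      have hstep1 : ∑ j ∈ Finset.Icc 1 (b-1), (b - j) ≤
          ∑ j ∈ Finset.Icc 1 (b-1), (b - j) * (m j : ℤ) := by
        refine Finset.sum_le_sum fun j hj => ?_
        have h1 := hone j (by rw [Finset.mem_Icc] at hj ⊢; omega)
        rw [Finset.mem_Icc] at hj
        nlinarith [hj.2]
      have hstep2 : ∑ j ∈ Finset.Icc 1 (b-1), (b - j) * (m j : ℤ) ≤
          ∑ j ∈ pos, (b - j) * (m j : ℤ) := by
        refine Finset.sum_le_sum_of_subset_of_nonneg hsub' fun j hj _ => ?_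
        rw [hposdef, Finset.mem_filter, Finsupp.mem_support_iff] at hj
        have h2 := (hsupp j hj.1).2
        have h3 : (0:ℤ) ≤ (m j : ℤ) := by positivity
        nlinarith
      have hexp : ∑ j ∈ pos, (b - j) * (m j : ℤ) = b * p - Sp := by
        rw [hSpdef, hpdef, Finset.mul_sum, ← Finset.sum_sub_distrib]
        exact Finset.sum_congr rfl fun j _ => by ring
      have hg := gauss' 1 (b-1) (by omega)
      have hcard : ((Finset.Icc 1 (b-1)).card : ℤ) = b - 1 := by
        rw [card_icc' 1 (b-1) (by omega)]; ring
      have hsplitsum : ∑ j ∈ Finset.Icc 1 (b-1), (b - j) =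
          ((Finset.Icc 1 (b-1)).card : ℤ) * (b - 1) - ∑ j ∈ Finset.Icc 1 (b-1), (j - 1) := by
        have h0 : ∑ j ∈ Finset.Icc 1 (b-1), (b - j)
            = ∑ j ∈ Finset.Icc 1 (b-1), ((b - 1) - (j - 1)) :=
          Finset.sum_congr rfl fun j _ => by ring
        rw [h0, Finset.sum_sub_distrib, Finset.sum_const, nsmul_eq_mul]
      have hchain : (b - 1) * b ≤ 2 * (b * p - Sp) := by
        have := hstep1.trans hstep2
        rw [hexp] at this
        rw [hsplitsum, hcard] at this
        nlinarith
      -- p ≥ b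
      have hpb : b ≤ p := by
        have hcard2 : ((Finset.Icc 1 b).card : ℤ) = b := by
          rw [card_icc' 1 b (by omega)]; ring
        have h4 : ∑ j ∈ Finset.Icc 1 b, (1:ℤ) ≤
            ∑ j ∈ Finset.Icc 1 b, (m j : ℤ) := Finset.sum_le_sum hone
        have h5 : ∑ j ∈ Finset.Icc 1 b, (m j : ℤ) ≤ p := by
          rw [hpdef]
          exact Finset.sum_le_sum_of_subset_of_nonneg hsub fun j _ _ => by positivity
        simp only [Finset.sum_const, nsmul_eq_mul, mul_one] at h4
        rw [hcard2] at h4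
        linarith
      nlinarith [mul_nonneg (by linarith : (0:ℤ) ≤ p - b) (by linarith : (0:ℤ) ≤ p - b + 1)]
    · have hempty : pos = ∅ := by
        rw [hposdef, Finset.filter_eq_empty_iff]
        intro j hj
        rw [Finsupp.mem_support_iff] at hj
        have := (hsupp j hj).2
        omega
      rw [hSpdef, hpdef, hempty]
      simp
  by_cases hA : a < -2
  · -- chain from a to -2 pulls d down
    have hsub : Finset.Icc a (-2) ⊆ neg := by
      intro j hj
      rw [Finset.mem_Icc] at hj
      rw [hnegdef, Finset.mem_filter, Finsupp.mem_support_iff]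
      refine ⟨?_, by omega⟩
      rcases eq_or_lt_of_le hj.1 with h | h
      · rwa [← h]
      · exact hconn₂ hA j (by omega) hj.2
    have hone : ∀ j ∈ Finset.Icc a (-2), 1 ≤ (m j : ℤ) := by
      intro j hj
      have := hsub hj
      rw [hnegdef, Finset.mem_filter, Finsupp.mem_support_iff] at this
      exact_mod_cast Nat.one_le_iff_ne_zero.mpr this.1
    have hstep1 : ∑ j ∈ Finset.Icc a (-2), (-j) ≤
        ∑ j ∈ Finset.Icc a (-2), (-j) * (m j : ℤ) := by
      refine Finset.sum_le_sum fun j hj => ?_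
      have h1 := hone j hj
      rw [Finset.mem_Icc] at hj
      nlinarith [hj.2]
    have hstep2 : ∑ j ∈ Finset.Icc a (-2), (-j) * (m j : ℤ) ≤
        ∑ j ∈ neg, (-j) * (m j : ℤ) := by
      refine Finset.sum_le_sum_of_subset_of_nonneg hsub fun j hj _ => ?_
      rw [hnegdef, Finset.mem_filter] at hj
      have h3 : (0:ℤ) ≤ (m j : ℤ) := by positivity
      have h4 : j ≤ 0 := by omega
      nlinarith
    have hexp : ∑ j ∈ neg, (-j) * (m j : ℤ) = -Sn := by
      rw [hSndef, ← Finset.sum_neg_distrib]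
      exact Finset.sum_congr rfl fun j _ => by ring
    have hg := gauss' a (-2) (by omega)
    have hcard : ((Finset.Icc a (-2)).card : ℤ) = -1 - a := by
      rw [card_icc' a (-2) (by omega)]; ring
    have hsplitsum : ∑ j ∈ Finset.Icc a (-2), (-j) =
        (-a) * ((Finset.Icc a (-2)).card : ℤ) - ∑ j ∈ Finset.Icc a (-2), (j - a) := by
      have h0 : ∑ j ∈ Finset.Icc a (-2), (-j)
          = ∑ j ∈ Finset.Icc a (-2), ((-a) - (j - a)) :=
        Finset.sum_congr rfl fun j _ => by ring
      rw [h0, Finset.sum_sub_distrib, Finset.sum_const, nsmul_eq_mul]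
      ring
    have hSn2 : 2 * Sn ≤ (-2 - a) * (-2 - a + 1) + 2 * a * (-1 - a) := by
      have h5 := hstep1.trans hstep2
      rw [hexp, hsplitsum, hcard] at h5
      nlinarith
    have hRnt : -1 - a ≤ Rn := by
      have h4 : ∑ j ∈ Finset.Icc a (-2), (1:ℤ) ≤
          ∑ j ∈ Finset.Icc a (-2), (m j : ℤ) := Finset.sum_le_sum hone
      have h5 : ∑ j ∈ Finset.Icc a (-2), (m j : ℤ) ≤ Rn := by
        rw [hRndef]
        exact Finset.sum_le_sum_of_subset_of_nonneg hsub fun j _ _ => by positivity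
      simp only [Finset.sum_const, nsmul_eq_mul, mul_one] at h4
      rw [hcard] at h4
      linarith
    nlinarith [mul_nonneg (by linarith : (0:ℤ) ≤ R - p + 1 + a)
      (by linarith : (0:ℤ) ≤ R + p + a + 2)]
  · by_cases hA2 : a ≤ 0
    · -- -2 ≤ a ≤ 0
      have hamem : a ∈ neg := by
        rw [hnegdef, Finset.mem_filter, Finsupp.mem_support_iff]
        exact ⟨ha, by omega⟩
      have hma : 1 ≤ (m a : ℤ) := by exact_mod_cast Nat.one_le_iff_ne_zero.mpr ha
      have hSn_a : Sn ≤ a := by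
        have hsing : {a} ⊆ neg := by
          intro j hj; rw [Finset.mem_singleton] at hj; subst hj; exact hamem
        have h9 : ∑ j ∈ ({a} : Finset ℤ), (-j) * (m j : ℤ) ≤
            ∑ j ∈ neg, (-j) * (m j : ℤ) := by
          refine Finset.sum_le_sum_of_subset_of_nonneg hsing fun j hj _ => ?_
          rw [hnegdef, Finset.mem_filter] at hj
          have h3 : (0:ℤ) ≤ (m j : ℤ) := by positivity
          have h4 : j ≤ 0 := by omega
          nlinarith
        have hexp2 : ∑ j ∈ neg, (-j) * (m j : ℤ) = -Sn := by
          rw [hSndef, ← Finset.sum_neg_distrib]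
          exact Finset.sum_congr rfl fun j _ => by ring
        rw [Finset.sum_singleton, hexp2] at h9
        have hprod : a * (m a : ℤ) ≤ a * 1 :=
          mul_le_mul_of_nonpos_left hma (by linarith)
        linarith
      have hRn1 : 1 ≤ Rn := by
        have := Finset.single_le_sum (f := fun j => ((m j : ℤ)))
          (fun j _ => by positivity) hamem
        rw [hRndef]; linarith
      nlinarith [mul_nonneg (by linarith : (0:ℤ) ≤ a + 2) (by linarith : (0:ℤ) ≤ R + 1),
        mul_nonneg (by linarith : (0:ℤ) ≤ R - 1 - p) (by linarith : (0:ℤ) ≤ R + p)]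
    · -- 1 ≤ a
      have hSn0 : Sn ≤ 0 := by
        refine Finset.sum_nonpos fun j hj => ?_
        rw [hnegdef, Finset.mem_filter] at hj
        have h3 : (0:ℤ) ≤ (m j : ℤ) := by positivity
        have h4 : j ≤ 0 := by omega
        nlinarith
      nlinarith [mul_nonneg hRn0 (by linarith : (0:ℤ) ≤ R + p + 1),
        mul_nonneg (by linarith : (0:ℤ) ≤ a - 1) (by linarith : (0:ℤ) ≤ R + 2)]


/-!
Context: `Z` is a threefold as in the paper; `E` is a semistable rank-2 vector bundle
on `Z` (normalized so that `1 − μ(L) ≤ μ(E) < 0`) with spectrum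
`H = ⊕_{j=a}^{b} O_{ℙ¹}(j)^{m_j}` (`a ≤ b`, `m_a, m_b ≠ 0`), abstracted by its
multiplicity function `m = spec E : ℤ →₀ ℕ`, with `r = rk H = Σ_j m_j` and
`d = deg H = Σ_j j·m_j`.  `AmpleAnticanGeneric` abstracts the hypothesis that `|K_S⁻¹|`
is ample for a generic `S ∈ |L|`; by the connectedness theorem the multiplicities then
satisfy: if `b > 1` then `m_1, …, m_{b−1} ≠ 0`, and if `a < −2` then
`m_{−2}, …, m_{a+1} ≠ 0` (hypotheses `hconn₁`, `hconn₂`).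

STATEMENT: `a ≥ (d−1)/(r+2) − (r+1)/2` and `b ≤ (d−1)/(r+2) + (r+1)/2`.
-/
theorem spectrum_bounds
    (Sheaf : Type*)
    (rank : Sheaf → ℕ)
    (Semistable Normalized : Sheaf → Prop)
    (spec : Sheaf → (ℤ →₀ ℕ))
    (AmpleAnticanGeneric : Prop) (hample : AmpleAnticanGeneric)
    (E : Sheaf) (hrk : rank E = 2) (hss : Semistable E) (hnorm : Normalized E)
    (a b : ℤ) (hab : a ≤ b)
    (ha : spec E a ≠ 0) (hb : spec E b ≠ 0)
    (hsupp : ∀ j : ℤ, spec E j ≠ 0 → a ≤ j ∧ j ≤ b)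
    -- connectedness of the spectrum (theorem 4.3 of the paper)
    (hconn₁ : 1 < b → ∀ j : ℤ, 1 ≤ j → j ≤ b - 1 → spec E j ≠ 0)
    (hconn₂ : a < -2 → ∀ j : ℤ, a + 1 ≤ j → j ≤ -2 → spec E j ≠ 0)
    -- r = rk H and d = deg H
    (r : ℕ) (hr : r = (spec E).sum fun _ mj => mj)
    (d : ℤ) (hd : d = (spec E).sum fun j mj => j * (mj : ℤ)) :
    ((a : ℚ) ≥ ((d : ℚ) - 1) / ((r : ℚ) + 2) - ((r : ℚ) + 1) / 2) ∧
    ((b : ℚ) ≤ ((d : ℚ) - 1) / ((r : ℚ) + 2) + ((r : ℚ) + 1) / 2) := by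
  set m := spec E with hm
  have hR : (r : ℤ) = ∑ j ∈ m.support, (m j : ℤ) := by
    rw [hr]; simp [Finsupp.sum]
  have hd' : d = ∑ j ∈ m.support, j * (m j : ℤ) := by
    rw [hd]; rfl
  have I := keyI m a b hab ha hb hsupp hconn₁ hconn₂ (r : ℤ) d hR hd'
  have II := keyII m a b hab ha hb hsupp hconn₁ hconn₂ (r : ℤ) d hR hd'
  have I' : 2 * (b:ℚ) * ((r:ℚ) + 2) ≤ 2 * (d:ℚ) + ((r:ℚ) + 2) * ((r:ℚ) + 1) - 2 := by
    exact_mod_cast I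
  have II' : 2 * (d:ℚ) ≤ ((r:ℚ) + 2) * (2 * (a:ℚ) + (r:ℚ) + 1) + 2 := by
    exact_mod_cast II
  have hpos : (0:ℚ) < (r:ℚ) + 2 := by positivity
  constructor
  · rw [ge_iff_le, sub_le_iff_le_add, div_le_iff₀ hpos]
    nlinarith [II']
  · rw [← sub_le_iff_le_add, le_div_iff₀ hpos]
    nlinarith [I']
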